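/- Let B ∈ M_g(ℂ) be symmetric and suppose that the Hermitian matrix 1 − H is positive semidefinite (i.e. all eigenvalues of H := B·Bᴴ are at most 1). Then for every k with 1 ≤ k ≤ g one has 0 ≤ Φ_k(B) ≤ min(2k, g). -/

import Mathlib

open Finset ComplexOrder

/-- The quantity `Φ_k(B) := 2 ∑_{i=1}^k H_{ii} − ∑_{i,j=1}^k |B_{ij}|²`, where
`H := B Bᴴ`, modelling the function `Φ_k(ω, I_k)` of the paper. -/
noncomputable def Phi (g k : ℕ) (B : Matrix (Fin g) (Fin g) ℂ) : ℝ :=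
  2 * ∑ i ∈ univ.filter (fun i : Fin g => (i : ℕ) < k),
        ((B * B.conjTranspose) i i).re
    - ∑ i ∈ univ.filter (fun i : Fin g => (i : ℕ) < k),
        ∑ j ∈ univ.filter (fun j : Fin g => (j : ℕ) < k), ‖B i j‖ ^ 2

/-- Let `B ∈ M_g(ℂ)` be symmetric such that `1 − H` is positive
semidefinite, where `H := B Bᴴ` (i.e. all eigenvalues of `H` are at most `1`).  Then for
every `1 ≤ k ≤ g` one has `0 ≤ Φ_k(B) ≤ min(2k, g)`. -/
theorem Phi_nonneg_and_le_min (g : ℕ) (hg : 1 ≤ g)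
    (B : Matrix (Fin g) (Fin g) ℂ) (hB : B.IsSymm)
    (hH : (1 - B * B.conjTranspose).PosSemidef)
    (k : ℕ) (hk1 : 1 ≤ k) (hkg : k ≤ g) :
    0 ≤ Phi g k B ∧ Phi g k B ≤ min (2 * (k : ℝ)) (g : ℝ) := by
  classical
  set f : Fin g → Fin g → ℝ := fun i j => ‖B i j‖ ^ 2 with hf
  have hf0 : ∀ i j, 0 ≤ f i j := fun i j => by positivity
  have hfsymm : ∀ i j, f i j = f j i := by
    intro i j; simp [hf, hB.apply i j]
  set S := univ.filter (fun i : Fin g => (i : ℕ) < k) with hS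
  have hdiag : ∀ i, ((B * B.conjTranspose) i i).re = ∑ j, f i j := by
    intro i
    simp only [Matrix.mul_apply, Matrix.conjTranspose_apply, Complex.re_sum]
    refine Finset.sum_congr rfl fun j _ => ?_
    rw [Complex.star_def, Complex.mul_conj, Complex.ofReal_re]
    simp [hf, Complex.sq_norm]
  have hle1 : ∀ i, ((B * B.conjTranspose) i i).re ≤ 1 := by
    intro i
    set v : Fin g → ℂ := Pi.single i 1 with hvdef
    have h := hH.dotProduct_mulVec_nonneg v
    have hv : dotProduct (star v) (Matrix.mulVec (1 - B * B.conjTranspose) v)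
        = (1 - B * B.conjTranspose) i i := by
      have hsv : star v = v := by
        funext j
        by_cases hj : j = i <;> simp [hvdef, Pi.single_apply, hj]
      rw [hsv, hvdef, Matrix.mulVec_single, single_dotProduct]
      simp
    rw [hv] at h
    have hre := Complex.le_def.mp h |>.1
    simp only [Matrix.sub_apply, Matrix.one_apply_eq, Complex.sub_re, Complex.one_re,
      Complex.zero_re] at hre
    linarith
  have hcard : S.card = k := by
    rw [← Finset.card_range k]
    apply Finset.card_bij (fun (i : Fin g) _ => (i : ℕ))
    · intro a ha; simp only [hS, mem_filter, mem_univ, true_and] at ha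
      simpa using ha
    · intro a _ b _ h; exact Fin.val_injective h
    · intro b hb; simp only [mem_range] at hb
      exact ⟨⟨b, lt_of_lt_of_le hb hkg⟩, by simp [hS, hb], rfl⟩
  have hcards : S.card + Sᶜ.card = g := by
    rw [Finset.card_add_card_compl]; simp
  have hsplit : ∀ i, ∑ j, f i j = ∑ j ∈ S, f i j + ∑ j ∈ Sᶜ, f i j :=
    fun i => (Finset.sum_add_sum_compl S _).symm
  -- Phi = A + C
  have hPhi : Phi g k B = (∑ i ∈ S, ∑ j, f i j) + ∑ i ∈ S, ∑ j ∈ Sᶜ, f i j := by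
    unfold Phi
    rw [← hS]
    rw [Finset.sum_congr rfl (fun i _ => hdiag i)]
    have : ∑ i ∈ S, ∑ j, f i j = ∑ i ∈ S, ∑ j ∈ S, f i j + ∑ i ∈ S, ∑ j ∈ Sᶜ, f i j := by
      rw [← Finset.sum_add_distrib]
      exact Finset.sum_congr rfl fun i _ => hsplit i
    rw [this]; ring
  have hA_nonneg : 0 ≤ ∑ i ∈ S, ∑ j, f i j :=
    Finset.sum_nonneg fun i _ => Finset.sum_nonneg fun j _ => hf0 i j
  have hC_nonneg : 0 ≤ ∑ i ∈ S, ∑ j ∈ Sᶜ, f i j :=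
    Finset.sum_nonneg fun i _ => Finset.sum_nonneg fun j _ => hf0 i j
  have hrow : ∀ i, ∑ j, f i j ≤ 1 := fun i => (hdiag i ▸ hle1 i)
  have hA_le : ∑ i ∈ S, ∑ j, f i j ≤ (k : ℝ) := by
    calc ∑ i ∈ S, ∑ j, f i j ≤ ∑ _i ∈ S, (1:ℝ) :=
          Finset.sum_le_sum fun i _ => hrow i
      _ = (k : ℝ) := by rw [Finset.sum_const, hcard]; simp
  have hC_le : ∑ i ∈ S, ∑ j ∈ Sᶜ, f i j ≤ ((g : ℝ) - k) := by
    rw [Finset.sum_comm]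
    have : ∀ j, ∑ i ∈ S, f i j ≤ 1 := by
      intro j
      calc ∑ i ∈ S, f i j = ∑ i ∈ S, f j i := Finset.sum_congr rfl fun i _ => hfsymm i j
        _ ≤ ∑ i, f j i := Finset.sum_le_sum_of_subset_of_nonneg (Finset.subset_univ S)
              (fun i _ _ => hf0 j i)
        _ ≤ 1 := hrow j
    calc ∑ j ∈ Sᶜ, ∑ i ∈ S, f i j ≤ ∑ _j ∈ Sᶜ, (1:ℝ) :=
          Finset.sum_le_sum fun j _ => this j
      _ = (Sᶜ.card : ℝ) := by rw [Finset.sum_const]; simp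
      _ = ((g : ℝ) - k) := by
          have : Sᶜ.card = g - k := by omega
          rw [this]; push_cast [Nat.cast_sub hkg]; ring_nf
  constructor
  · rw [hPhi]; linarith
  · rw [hPhi, le_min_iff]
    constructor
    · -- Phi = 2A - B ≤ 2A ≤ 2k; equivalently A + C ≤ 2A since C ≤ A? Not directly.
      -- Use original form: Phi ≤ 2A.
      have hBsum : 0 ≤ ∑ i ∈ S, ∑ j ∈ S, f i j :=
        Finset.sum_nonneg fun i _ => Finset.sum_nonneg fun j _ => hf0 i j
      have : (∑ i ∈ S, ∑ j, f i j) + ∑ i ∈ S, ∑ j ∈ Sᶜ, f i j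
          = 2 * (∑ i ∈ S, ∑ j, f i j) - ∑ i ∈ S, ∑ j ∈ S, f i j := by
        have := fun i (_ : i ∈ S) => hsplit i
        rw [Finset.sum_congr rfl this, Finset.sum_add_distrib]; ring
      rw [this]; linarith
    · linarith
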